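/- arXiv:1706.01714 — 9 statements merged into one kernel-verified Lean document; each statement's English description precedes it below -/
import Mathlib

section
/- Let G be a group acting on categories C and D, and let (Φ, δ) be a right lax G-functor from C to D. If the natural transformation δ₁ : ρ₁ ∘ Φ → Φ ∘ ρ₁ is an isomorphism, then δ_g is an isomorphism for every g ∈ G, i.e. Φ is a weak G-functor. -/
open CategoryTheory

universe v₁ v₂ v₃ u₁ u₂ u₃

/-- A (weak) action of a group `G` on a category `C`: autoequivalences `ρ g` together with
isomorphisms `φ g h : ρ g ∘ ρ h ≅ ρ (g * h)` satisfying the associativity axiom. -/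
structure GrpAction (G : Type*) [Group G] (C : Type u₁) [Category.{v₁} C] where
  ρ : G → C ⥤ C
  isEquiv : ∀ g : G, (ρ g).IsEquivalence
  φ : ∀ g h : G, ρ h ⋙ ρ g ≅ ρ (g * h)
  assoc : ∀ (g h k : G) (x : C),
    (ρ g).map ((φ h k).hom.app x) ≫ (φ g (h * k)).hom.app x =
      (φ g h).hom.app ((ρ k).obj x) ≫ (φ (g * h) k).hom.app x ≫
        eqToHom (by rw [mul_assoc])

variable {G : Type*} [Group G]
variable {C : Type u₁} [Category.{v₁} C] {D : Type u₂} [Category.{v₂} D]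
  {E : Type u₃} [Category.{v₃} E]

/-- A right lax `G`-functor structure on `Φ : C ⥤ D`: natural transformations
`δ g : ρ g ∘ Φ ⟶ Φ ∘ ρ g` satisfying the pentagon axiom. -/
structure RightLaxStr (σ : GrpAction G C) (τ : GrpAction G D) (Φ : C ⥤ D) where
  δ : ∀ g : G, Φ ⋙ τ.ρ g ⟶ σ.ρ g ⋙ Φ
  pentagon : ∀ (g h : G) (x : C),
    (τ.φ g h).hom.app (Φ.obj x) ≫ (δ (g * h)).app x =
      (τ.ρ g).map ((δ h).app x) ≫ (δ g).app ((σ.ρ h).obj x) ≫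
        Φ.map ((σ.φ g h).hom.app x)

/-- A left lax `G`-functor structure on `Φ : C ⥤ D`: natural transformations
`δ g : Φ ∘ ρ g ⟶ ρ g ∘ Φ` satisfying the dual pentagon axiom. -/
structure LeftLaxStr (σ : GrpAction G C) (τ : GrpAction G D) (Φ : C ⥤ D) where
  δ : ∀ g : G, σ.ρ g ⋙ Φ ⟶ Φ ⋙ τ.ρ g
  pentagon : ∀ (g h : G) (x : C),
    (δ g).app ((σ.ρ h).obj x) ≫ (τ.ρ g).map ((δ h).app x) ≫
        (τ.φ g h).hom.app (Φ.obj x) =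
      Φ.map ((σ.φ g h).hom.app x) ≫ (δ (g * h)).app x

/-- A weak `G`-functor structure on `Φ : C ⥤ D`: natural isomorphisms
`δ g : ρ g ∘ Φ ≅ Φ ∘ ρ g` satisfying the pentagon axiom. -/
structure WeakStr (σ : GrpAction G C) (τ : GrpAction G D) (Φ : C ⥤ D) where
  δ : ∀ g : G, Φ ⋙ τ.ρ g ≅ σ.ρ g ⋙ Φ
  pentagon : ∀ (g h : G) (x : C),
    (τ.φ g h).hom.app (Φ.obj x) ≫ (δ (g * h)).hom.app x =
      (τ.ρ g).map ((δ h).hom.app x) ≫ (δ g).hom.app ((σ.ρ h).obj x) ≫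
        Φ.map ((σ.φ g h).hom.app x)



section Aux
variable {X : Type u₁} [Category.{v₁} X]

lemma aux_isSplitEpi_of_isIso_comp {a b c : X} (f : a ⟶ b) (g : b ⟶ c)
    (h : IsIso (f ≫ g)) : IsSplitEpi g :=
  IsSplitEpi.mk' ⟨inv (f ≫ g) ≫ f, by simp⟩

lemma aux_isSplitMono_of_isIso_comp {a b c : X} (f : a ⟶ b) (g : b ⟶ c)
    (h : IsIso (f ≫ g)) : IsSplitMono f :=
  IsSplitMono.mk' ⟨g ≫ inv (f ≫ g), by simp [← Category.assoc]⟩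

end Aux

/-- If `δ₁` of a right lax `G`-functor is an isomorphism, then all `δ_g` are
isomorphisms, i.e. `Φ` is a weak `G`-functor. -/
theorem RightLaxStr.isIso_of_isIso_one {σ : GrpAction G C} {τ : GrpAction G D}
    {Φ : C ⥤ D} (R : RightLaxStr σ τ Φ) (h1 : IsIso (R.δ 1)) :
    ∀ g : G, IsIso (R.δ g) := by
  intro g
  have key : ∀ k : G, k = (1 : G) → IsIso (R.δ k) := fun k hk => hk ▸ h1
  -- δ g is split epi at every object of the form (σ.ρ g⁻¹).obj x
  haveI hEσ := σ.isEquiv g⁻¹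
  haveI hEσg := σ.isEquiv g
  -- From pentagon (g, g⁻¹): the composite is iso
  have comp1 : ∀ x : C, IsIso ((τ.ρ g).map ((R.δ g⁻¹).app x) ≫
      (R.δ g).app ((σ.ρ g⁻¹).obj x)) := by
    intro x
    haveI : IsIso (R.δ (g * g⁻¹)) := key _ (mul_inv_cancel g)
    have pent := R.pentagon g g⁻¹ x
    have hiso : IsIso ((τ.φ g g⁻¹).hom.app (Φ.obj x) ≫ (R.δ (g * g⁻¹)).app x) :=
      inferInstance
    rw [pent] at hiso
    rw [← Category.assoc] at hiso
    exact IsIso.of_isIso_comp_right _ (Φ.map ((σ.φ g g⁻¹).hom.app x))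
  -- From pentagon (g⁻¹, g): the composite is iso
  have comp2 : ∀ x : C, IsIso ((τ.ρ g⁻¹).map ((R.δ g).app x) ≫
      (R.δ g⁻¹).app ((σ.ρ g).obj x)) := by
    intro x
    haveI : IsIso (R.δ (g⁻¹ * g)) := key _ (inv_mul_cancel g)
    have pent := R.pentagon g⁻¹ g x
    have hiso : IsIso ((τ.φ g⁻¹ g).hom.app (Φ.obj x) ≫ (R.δ (g⁻¹ * g)).app x) :=
      inferInstance
    rw [pent] at hiso
    rw [← Category.assoc] at hiso
    exact IsIso.of_isIso_comp_right _ (Φ.map ((σ.φ g⁻¹ g).hom.app x))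
  -- each app is mono: ρ_{g⁻¹} of it is split mono, faithful reflects mono
  have hmono : ∀ x : C, Mono ((R.δ g).app x) := by
    intro x
    haveI hτ := τ.isEquiv g⁻¹
    haveI : IsSplitMono ((τ.ρ g⁻¹).map ((R.δ g).app x)) :=
      aux_isSplitMono_of_isIso_comp _ _ (comp2 x)
    haveI : Mono ((τ.ρ g⁻¹).map ((R.δ g).app x)) := inferInstance
    exact (τ.ρ g⁻¹).mono_of_mono_map this
  -- each app is split epi
  have hepi : ∀ x : C, IsSplitEpi ((R.δ g).app x) := by
    intro y
    obtain ⟨x, ⟨u⟩⟩ : ∃ x : C, Nonempty ((σ.ρ g⁻¹).obj x ≅ y) :=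
      ⟨(σ.ρ g⁻¹).objPreimage y, ⟨(σ.ρ g⁻¹).objObjPreimageIso y⟩⟩
    haveI h1' : IsSplitEpi ((R.δ g).app ((σ.ρ g⁻¹).obj x)) :=
      aux_isSplitEpi_of_isIso_comp _ _ (comp1 x)
    have nat := (R.δ g).naturality u.hom
    have : (R.δ g).app y =
        inv ((Φ ⋙ τ.ρ g).map u.hom) ≫ (R.δ g).app ((σ.ρ g⁻¹).obj x) ≫
          (σ.ρ g ⋙ Φ).map u.hom := by
      rw [← nat, IsIso.inv_hom_id_assoc]
    rw [this]
    exact IsSplitEpi.mk' ⟨inv ((σ.ρ g ⋙ Φ).map u.hom) ≫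
      section_ ((R.δ g).app ((σ.ρ g⁻¹).obj x)) ≫ (Φ ⋙ τ.ρ g).map u.hom, by simp⟩
  haveI : ∀ x : C, IsIso ((R.δ g).app x) := fun x => by
    haveI := hmono x
    haveI := hepi x
    exact isIso_of_mono_of_isSplitEpi _
  exact NatIso.isIso_of_isIso_app _
end

section
/- Let G be a group acting on categories C and D, and let (Φ, δ) be a right lax G-functor from C to D. Let φ₁ : ρ₁ ≅ id denote the unit isomorphism of each action (characterized by ρ₁ φ₁ = φ_{1,1}). If δ₁ : ρ₁ ∘ Φ → Φ ∘ ρ₁ is an isomorphism, then the identity element axiom holds: (Φ φ₁) ∘ δ₁ = φ₁ Φ as natural transformations ρ₁ ∘ Φ → Φ. -/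
open CategoryTheory

universe v₁ v₂ v₃ u₁ u₂ u₃

variable {G : Type*} [Group G]
variable {C : Type u₁} [Category.{v₁} C] {D : Type u₂} [Category.{v₂} D]
  {E : Type u₃} [Category.{v₃} E]

/-- If `δ₁` of a right lax `G`-functor is an isomorphism, then the identity element
axiom `(Φ φ₁) ∘ δ₁ = φ₁ Φ` holds, where `φ₁` denotes the unit isomorphisms of the
actions (characterized by `ρ₁ φ₁ = φ_{1,1}`). -/
theorem RightLaxStr.unit_axiom_of_isIso_one {σ : GrpAction G C} {τ : GrpAction G D}
    {Φ : C ⥤ D} (R : RightLaxStr σ τ Φ)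
    (eC : σ.ρ 1 ≅ 𝟭 C)
    (heC : ∀ x : C, (σ.ρ 1).map (eC.hom.app x) =
      (σ.φ 1 1).hom.app x ≫ eqToHom (by rw [one_mul]; rfl))
    (eD : τ.ρ 1 ≅ 𝟭 D)
    (heD : ∀ y : D, (τ.ρ 1).map (eD.hom.app y) =
      (τ.φ 1 1).hom.app y ≫ eqToHom (by rw [one_mul]; rfl))
    (h1 : IsIso (R.δ 1)) :
    ∀ x : C, (R.δ 1).app x ≫ Φ.map (eC.hom.app x) = eD.hom.app (Φ.obj x) := by
  have key : ∀ (g g' : G) (e : g = g') (x : C),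
      (R.δ g).app x = eqToHom (by rw [e]) ≫ (R.δ g').app x ≫ eqToHom (by rw [e]) := by
    rintro g g' rfl x; simp
  intro x
  haveI := τ.isEquiv 1
  haveI := h1
  have pent := R.pentagon 1 1 x
  rw [key (1*1) 1 (one_mul 1)] at pent
  apply (τ.ρ 1).map_injective
  apply (cancel_mono ((R.δ 1).app x)).mp
  have nat := (R.δ 1).naturality (eC.hom.app x)
  simp only [Functor.comp_map, Functor.id_obj] at nat
  rw [Functor.map_comp, Category.assoc, nat, heD, heC]
  simp only [Functor.map_comp, eqToHom_map, Category.assoc]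
  rw [← Category.assoc, ← Category.assoc ((τ.φ 1 1).hom.app (Φ.obj x))]
  apply (cancel_mono (eqToHom (by rw [one_mul]) :
    Φ.obj ((σ.ρ 1).obj x) ⟶ Φ.obj ((σ.ρ (1*1)).obj x))).mp
  simp only [Category.assoc, eqToHom_trans, eqToHom_refl, Category.comp_id]
  exact pent.symm
end

section
/- Let G be a group acting on categories C and D, and let (Φ, δ) be a left lax G-functor from C to D. If δ₁ : Φ ∘ ρ₁ → ρ₁ ∘ Φ is an isomorphism, then δ_g is an isomorphism for every g ∈ G, and the identity element axiom holds: (φ₁ Φ) ∘ δ₁ = Φ φ₁ as natural transformations Φ ∘ ρ₁ → Φ, where φ₁ : ρ₁ ≅ id is the unit isomorphism of each action. -/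
open CategoryTheory

universe v₁ v₂ v₃ u₁ u₂ u₃

variable {G : Type*} [Group G]
variable {C : Type u₁} [Category.{v₁} C] {D : Type u₂} [Category.{v₂} D]
  {E : Type u₃} [Category.{v₃} E]

private lemma LeftLaxStr.delta_congr {σ : GrpAction G C} {τ : GrpAction G D}
    {Φ : C ⥤ D} (L : LeftLaxStr σ τ Φ) {g h : G} (e : g = h) (x : C) :
    (L.δ g).app x = eqToHom (by rw [e]) ≫ (L.δ h).app x ≫ eqToHom (by rw [e]) := by
  subst e; simp

/-- If `δ₁` of a left lax `G`-functor is an isomorphism, then all `δ_g` are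
isomorphisms and the identity element axiom `(φ₁ Φ) ∘ δ₁ = Φ φ₁` holds, where `φ₁`
denotes the unit isomorphisms of the actions (characterized by `ρ₁ φ₁ = φ_{1,1}`). -/
theorem LeftLaxStr.weak_of_isIso_one {σ : GrpAction G C} {τ : GrpAction G D}
    {Φ : C ⥤ D} (L : LeftLaxStr σ τ Φ)
    (eC : σ.ρ 1 ≅ 𝟭 C)
    (heC : ∀ x : C, (σ.ρ 1).map (eC.hom.app x) =
      (σ.φ 1 1).hom.app x ≫ eqToHom (by rw [one_mul]; rfl))
    (eD : τ.ρ 1 ≅ 𝟭 D)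
    (heD : ∀ y : D, (τ.ρ 1).map (eD.hom.app y) =
      (τ.φ 1 1).hom.app y ≫ eqToHom (by rw [one_mul]; rfl))
    (h1 : IsIso (L.δ 1)) :
    (∀ g : G, IsIso (L.δ g)) ∧
    (∀ x : C, (L.δ 1).app x ≫ eD.hom.app (Φ.obj x) = Φ.map (eC.hom.app x)) := by

  haveI := h1
  have hiso : ∀ (k : G), k = 1 → ∀ x : C, IsIso ((L.δ k).app x) := by
    rintro k rfl x; infer_instance
  constructor
  · intro g
    haveI := σ.isEquiv g⁻¹
    haveI := τ.isEquiv g⁻¹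
    -- every component of `δ g` is a split epimorphism
    have epi : ∀ x : C, IsSplitEpi ((L.δ g).app x) := by
      intro x
      have P := L.pentagon g⁻¹ g x
      haveI := hiso (g⁻¹ * g) (inv_mul_cancel g) x
      set a := (L.δ g⁻¹).app ((σ.ρ g).obj x) with ha
      set c := (τ.φ g⁻¹ g).hom.app (Φ.obj x) with hc
      set r := Φ.map ((σ.φ g⁻¹ g).hom.app x) ≫ (L.δ (g⁻¹ * g)).app x with hr
      have hab : a ≫ (τ.ρ g⁻¹).map ((L.δ g).app x) = r ≫ inv c := by
        rw [← P]; simp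
      have hs : (c ≫ inv r ≫ a) ≫ (τ.ρ g⁻¹).map ((L.δ g).app x) = 𝟙 _ := by
        simp [Category.assoc, hab]
      refine ⟨⟨⟨(τ.ρ g⁻¹).preimage (c ≫ inv r ≫ a), ?_⟩⟩⟩
      apply (τ.ρ g⁻¹).map_injective
      simpa using hs
    -- components at objects of the form `(σ.ρ g⁻¹).obj x` are split monos
    have mono : ∀ x : C, IsSplitMono ((L.δ g).app ((σ.ρ g⁻¹).obj x)) := by
      intro x
      have P := L.pentagon g g⁻¹ x
      haveI := hiso (g * g⁻¹) (mul_inv_cancel g) x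
      refine ⟨⟨⟨((τ.ρ g).map ((L.δ g⁻¹).app x) ≫ (τ.φ g g⁻¹).hom.app (Φ.obj x)) ≫
        inv (Φ.map ((σ.φ g g⁻¹).hom.app x) ≫ (L.δ (g * g⁻¹)).app x), ?_⟩⟩⟩
      simp [reassoc_of% P]
    -- hence isos at those objects
    have iso : ∀ x : C, IsIso ((L.δ g).app ((σ.ρ g⁻¹).obj x)) := by
      intro x
      haveI := mono x
      haveI := epi ((σ.ρ g⁻¹).obj x)
      haveI : Mono ((L.δ g).app ((σ.ρ g⁻¹).obj x)) := inferInstance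
      exact isIso_of_mono_of_isSplitEpi _
    -- transfer to all objects by essential surjectivity
    have iso' : ∀ y : C, IsIso ((L.δ g).app y) := by
      intro y
      let i := (σ.ρ g⁻¹).objObjPreimageIso y
      have N := (L.δ g).naturality i.hom
      have heq : (L.δ g).app y =
          inv ((σ.ρ g ⋙ Φ).map i.hom) ≫ (L.δ g).app ((σ.ρ g⁻¹).obj _)
            ≫ (Φ ⋙ τ.ρ g).map i.hom := by
        rw [IsIso.eq_inv_comp]; exact N
      rw [heq]
      haveI := iso ((σ.ρ g⁻¹).objPreimage y)
      infer_instance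
    exact NatIso.isIso_of_isIso_app _
  · intro x
    haveI := τ.isEquiv 1
    have P := L.pentagon 1 1 x
    have hC' : (σ.φ 1 1).hom.app x =
        (σ.ρ 1).map (eC.hom.app x) ≫ eqToHom (by rw [one_mul]; rfl) := by
      rw [heC x]; simp
    have hD' : (τ.φ 1 1).hom.app (Φ.obj x) =
        (τ.ρ 1).map (eD.hom.app (Φ.obj x)) ≫ eqToHom (by rw [one_mul]; rfl) := by
      rw [heD]; simp
    rw [hC', hD', L.delta_congr (one_mul (1 : G)) x] at P
    simp only [Functor.map_comp, eqToHom_map, Category.assoc, eqToHom_trans,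
      eqToHom_refl, Category.comp_id, Category.id_comp, eqToHom_trans_assoc] at P
    have N : Φ.map ((σ.ρ 1).map (eC.hom.app x)) ≫ (L.δ 1).app x =
        (L.δ 1).app ((σ.ρ 1).obj x) ≫ (τ.ρ 1).map (Φ.map (eC.hom.app x)) :=
      (L.δ 1).naturality (eC.hom.app x)
    rw [reassoc_of% N] at P
    have P2 := (cancel_epi ((L.δ 1).app ((σ.ρ 1).obj x))).mp P
    simp only [← Category.assoc] at P2
    rw [comp_eqToHom_iff] at P2
    simp only [Category.assoc, eqToHom_trans, eqToHom_refl, Category.comp_id] at P2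
    apply (τ.ρ 1).map_injective
    rw [Functor.map_comp]
    exact P2
end

section
/- Let G be a group acting on categories C and D, and let Ψ : D → C and Φ : C → D be weak G-functors forming a G-adjoint pair, with Ψ left adjoint to Φ, unit ε : id_D → Φ ∘ Ψ and counit η : Ψ ∘ Φ → id_C, both G-natural. Then the induced functors Ψ^G : D^G → C^G and Φ^G : C^G → D^G on categories of equivariant objects form an adjoint pair, with Ψ^G left adjoint to Φ^G, whose unit and counit are the induced transformations ε^G and η^G. -/
open CategoryTheory

universe v₁ v₂ v₃ u₁ u₂ u₃

variable {G : Type*} [Group G]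
variable {C : Type u₁} [Category.{v₁} C] {D : Type u₂} [Category.{v₂} D]
  {E : Type u₃} [Category.{v₃} E]

/-- A `G`-equivariant object: an object `c` with isomorphisms `θ g : c ≅ ρ g c`
compatible with the group action. -/
structure EquivObj (σ : GrpAction G C) where
  c : C
  θ : ∀ g : G, c ≅ (σ.ρ g).obj c
  compat : ∀ g h : G,
    (θ (g * h)).hom = (θ g).hom ≫ (σ.ρ g).map ((θ h).hom) ≫ (σ.φ g h).hom.app c

/-- Morphisms of equivariant objects: morphisms of underlying objects commuting with
the linearizations. -/
@[ext]
structure EquivHom {σ : GrpAction G C} (x y : EquivObj σ) where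
  f : x.c ⟶ y.c
  comm : ∀ g : G, (x.θ g).hom ≫ (σ.ρ g).map f = f ≫ (y.θ g).hom

instance EquivObj.category (σ : GrpAction G C) : Category (EquivObj σ) where
  Hom x y := EquivHom x y
  id x := ⟨𝟙 x.c, by intro g; simp⟩
  comp u v := ⟨u.f ≫ v.f, by
    intro g
    rw [Functor.map_comp, ← Category.assoc, u.comm, Category.assoc, v.comm,
      ← Category.assoc]⟩
  id_comp u := by apply EquivHom.ext; exact Category.id_comp u.f
  comp_id u := by apply EquivHom.ext; exact Category.comp_id u.f
  assoc u v w := by apply EquivHom.ext; exact Category.assoc u.f v.f w.f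

@[simp] lemma EquivObj.id_f {σ : GrpAction G C} (x : EquivObj σ) :
    (𝟙 x : EquivHom x x).f = 𝟙 x.c := rfl

@[simp] lemma EquivObj.comp_f {σ : GrpAction G C} {x y z : EquivObj σ}
    (u : x ⟶ y) (v : y ⟶ z) : (u ≫ v).f = u.f ≫ v.f := rfl

@[ext] lemma EquivObj.hom_ext {σ : GrpAction G C} {x y : EquivObj σ}
    (u v : x ⟶ y) (h : u.f = v.f) : u = v := EquivHom.ext h

/-- The forgetful functor from equivariant objects. -/
def equivForget (σ : GrpAction G C) : EquivObj σ ⥤ C where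
  obj x := x.c
  map u := u.f

namespace WeakStr

variable {σ : GrpAction G C} {τ : GrpAction G D} {Φ : C ⥤ D}

/-- The lift of an equivariant object along a weak `G`-functor. -/
def liftObj (W : WeakStr σ τ Φ) (a : EquivObj σ) : EquivObj τ where
  c := Φ.obj a.c
  θ g := Φ.mapIso (a.θ g) ≪≫ ((W.δ g).app a.c).symm
  compat g h := by
    have nat : (W.δ g).inv.app a.c ≫ (τ.ρ g).map (Φ.map (a.θ h).hom) =
        Φ.map ((σ.ρ g).map (a.θ h).hom) ≫ (W.δ g).inv.app ((σ.ρ h).obj a.c) :=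
      ((W.δ g).inv.naturality (a.θ h).hom).symm
    have pent : (W.δ g).inv.app ((σ.ρ h).obj a.c) ≫
        (τ.ρ g).map ((W.δ h).inv.app a.c) ≫ (τ.φ g h).hom.app (Φ.obj a.c) =
        Φ.map ((σ.φ g h).hom.app a.c) ≫ (W.δ (g * h)).inv.app a.c := by
      rw [← Iso.app_inv, ← Iso.app_inv, ← Iso.app_inv, Iso.eq_comp_inv]
      simp only [Iso.app_inv, Iso.app_hom, Category.assoc]
      rw [W.pentagon g h a.c]
      slice_lhs 2 3 => rw [← Functor.map_comp, Iso.inv_hom_id_app]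
      simp
    simp only [Iso.trans_hom, Functor.mapIso_hom, Iso.symm_hom, Iso.app_inv,
      Functor.map_comp, Category.assoc]
    rw [a.compat g h]
    simp only [Functor.map_comp, Category.assoc]
    rw [reassoc_of% nat, pent]

/-- The induced functor between categories of equivariant objects. -/
def equivFunctor (W : WeakStr σ τ Φ) : EquivObj σ ⥤ EquivObj τ where
  obj := W.liftObj
  map {a b} u := ⟨Φ.map u.f, by
    intro g
    have nat : (W.δ g).inv.app a.c ≫ (τ.ρ g).map (Φ.map u.f) =
        Φ.map ((σ.ρ g).map u.f) ≫ (W.δ g).inv.app b.c :=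
      ((W.δ g).inv.naturality u.f).symm
    simp only [liftObj, Iso.trans_hom, Functor.mapIso_hom, Iso.symm_hom, Iso.app_inv,
      Category.assoc]
    rw [nat, ← Category.assoc, ← Φ.map_comp, u.comm g, Φ.map_comp,
      Category.assoc]⟩
  map_id a := by apply EquivObj.hom_ext; simp [liftObj]
  map_comp u v := by apply EquivObj.hom_ext; simp [liftObj]

end WeakStr

/-- A `G`-adjoint pair of weak `G`-functors (an adjunction whose unit and counit
are `G`-natural) induces an adjoint pair between the categories of equivariant
objects, with unit and counit induced by those of the original adjunction. -/
theorem WeakStr.gAdjunction_descends {σ : GrpAction G C} {τ : GrpAction G D}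
    {Φ : C ⥤ D} {Ψ : D ⥤ C} (WΦ : WeakStr σ τ Φ) (WΨ : WeakStr τ σ Ψ)
    (adj : Ψ ⊣ Φ)
    (hunit : ∀ (g : G) (d : D),
      (τ.ρ g).map (adj.unit.app d) ≫ (WΦ.δ g).hom.app (Ψ.obj d) ≫
          Φ.map ((WΨ.δ g).hom.app d) =
        adj.unit.app ((τ.ρ g).obj d))
    (hcounit : ∀ (g : G) (x : C),
      (σ.ρ g).map (adj.counit.app x) =
        (WΨ.δ g).hom.app (Φ.obj x) ≫ Ψ.map ((WΦ.δ g).hom.app x) ≫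
          adj.counit.app ((σ.ρ g).obj x)) :
    ∃ adjG : WΨ.equivFunctor ⊣ WΦ.equivFunctor,
      (∀ b : EquivObj τ, (equivForget τ).map (adjG.unit.app b) = adj.unit.app b.c) ∧
      (∀ a : EquivObj σ, (equivForget σ).map (adjG.counit.app a) = adj.counit.app a.c) := by
  refine ⟨{
    unit := { app := fun b => ⟨adj.unit.app b.c, ?_⟩, naturality := ?_ }
    counit := { app := fun a => ⟨adj.counit.app a.c, ?_⟩, naturality := ?_ }
    left_triangle_components := ?_
    right_triangle_components := ?_ }, fun b => rfl, fun a => rfl⟩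
  · -- unit comm
    intro g
    have h1 : adj.unit.app ((τ.ρ g).obj b.c) ≫
        Φ.map ((WΨ.δ g).inv.app b.c) ≫ (WΦ.δ g).inv.app (Ψ.obj b.c) =
        (τ.ρ g).map (adj.unit.app b.c) := by
      rw [← hunit g b.c]
      simp only [Category.assoc, ← Functor.map_comp_assoc, Iso.hom_inv_id_app]
      simp
    have h2 := adj.unit.naturality (b.θ g).hom
    simp only [equivFunctor, liftObj, Functor.comp_obj, Functor.id_obj, Iso.trans_hom,
      Functor.mapIso_hom, Iso.symm_hom, Iso.app_inv, Functor.comp_map, Functor.id_map,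
      Functor.map_comp, Category.assoc]
    rw [← h1, ← reassoc_of% h2]
  · -- unit naturality
    intro x y u
    apply EquivObj.hom_ext
    exact adj.unit.naturality u.f
  · -- counit comm
    intro g
    simp only [equivFunctor, liftObj, Functor.comp_obj, Functor.id_obj, Iso.trans_hom,
      Functor.mapIso_hom, Iso.symm_hom, Iso.app_inv, Functor.comp_map, Functor.id_map,
      Functor.map_comp, Category.assoc]
    rw [hcounit g a.c]
    slice_lhs 3 4 => rw [Iso.inv_hom_id_app]
    simp only [Category.id_comp, Functor.comp_obj, Category.assoc]
    slice_lhs 2 3 => rw [← Functor.map_comp, Iso.inv_hom_id_app]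
    have hid : Ψ.map (𝟙 ((σ.ρ g ⋙ Φ).obj a.c)) = 𝟙 (Ψ.obj ((σ.ρ g ⋙ Φ).obj a.c)) :=
      Ψ.map_id _
    have hid2 : 𝟙 (Ψ.obj ((σ.ρ g ⋙ Φ).obj a.c)) ≫ adj.counit.app ((σ.ρ g).obj a.c) =
        adj.counit.app ((σ.ρ g).obj a.c) := Category.id_comp _
    rw [hid, hid2]
    exact adj.counit.naturality (a.θ g).hom
  · -- counit naturality
    intro x y u
    apply EquivObj.hom_ext
    exact adj.counit.naturality u.f
  · intro x
    apply EquivObj.hom_ext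
    simp [equivFunctor, liftObj, equivForget]
  · intro y
    apply EquivObj.hom_ext
    simp [equivFunctor, liftObj, equivForget]
end

section
/- Let G be a group acting on categories C and D, let (Φ, δ) : C → D be a weak G-functor, and let Ψ : D → C be a left adjoint of Φ with unit ε : id_D → Φ ∘ Ψ and counit η : Ψ ∘ Φ → id_C. Define δ'_g : Ψ ∘ ρ_g → ρ_g ∘ Ψ as the mate of δ_g, i.e. δ'_g = (η ρ_g Ψ) ∘ (Ψ δ_g Ψ) ∘ (Ψ ρ_g ε). Then the transformations δ'_g satisfy the dual pentagon axiom, making (Ψ, δ') a left lax G-functor, and each δ'_g is an isomorphism, so Ψ is a weak G-functor. -/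
open CategoryTheory

universe v₁ v₂ v₃ u₁ u₂ u₃

variable {G : Type*} [Group G]
variable {C : Type u₁} [Category.{v₁} C] {D : Type u₂} [Category.{v₂} D]
  {E : Type u₃} [Category.{v₃} E]

section MateAux

open CategoryTheory Functor Adjunction

variable {A' : Type*} {B' : Type*} {C' : Type*} {D' : Type*}
variable [Category A'] [Category B'] [Category C'] [Category D']
variable {G' : A' ⥤ C'} {H' : B' ⥤ D'} {L₁ : A' ⥤ B'} {R₁ : B' ⥤ A'}
  {L₂ : C' ⥤ D'} {R₂ : D' ⥤ C'}
variable (adj₁ : L₁ ⊣ R₁) (adj₂ : L₂ ⊣ R₂)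

theorem mateEquiv_whiskerLeft_vert {H'' : B' ⥤ D'} (α : G' ⋙ L₂ ⟶ L₁ ⋙ H') (ν : H' ⟶ H'') :
    mateEquiv adj₁ adj₂ (α ≫ whiskerLeft L₁ ν) =
      mateEquiv adj₁ adj₂ α ≫ whiskerRight ν R₂ := by
  ext b
  simp only [mateEquiv, Equiv.coe_fn_mk, NatTrans.comp_app, whiskerLeft_app, whiskerRight_app,
    Functor.comp_obj, Category.assoc, Functor.map_comp, Functor.associator_hom_app,
    Functor.associator_inv_app, Functor.leftUnitor_hom_app, Functor.rightUnitor_inv_app,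
    Category.id_comp, Category.comp_id]
  simp only [Functor.comp_map, ← R₂.map_comp, Category.assoc, ← ν.naturality,
    Category.id_comp, Category.comp_id]
  erw [Category.id_comp, Category.comp_id]
  have := congrArg R₂.map (ν.naturality (adj₁.counit.app b))
  simp only [Functor.map_comp] at this
  erw [this]
  rfl

theorem mateEquiv_whiskerRight_vert {G'' : A' ⥤ C'} (μ : G' ⟶ G'') (α : G'' ⋙ L₂ ⟶ L₁ ⋙ H') :
    mateEquiv adj₁ adj₂ (whiskerRight μ L₂ ≫ α) =
      whiskerLeft R₁ μ ≫ mateEquiv adj₁ adj₂ α := by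
  ext b
  simp only [mateEquiv, Equiv.coe_fn_mk, NatTrans.comp_app, whiskerLeft_app, whiskerRight_app,
    Functor.comp_obj, Category.assoc, Functor.map_comp, Functor.associator_hom_app,
    Functor.associator_inv_app, Functor.leftUnitor_hom_app, Functor.rightUnitor_inv_app,
    Category.id_comp, Category.comp_id]
  rw [← adj₂.unit_naturality_assoc]

end MateAux

/-- The mates of the structure maps of a weak `G`-functor `Φ` along an adjunction
`Ψ ⊣ Φ` make the left adjoint `Ψ` a left lax `G`-functor, and all the mates are
isomorphisms, so `Ψ` becomes a weak `G`-functor. -/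
theorem WeakStr.leftAdjoint_weak {σ : GrpAction G C} {τ : GrpAction G D}
    {Φ : C ⥤ D} {Ψ : D ⥤ C} (W : WeakStr σ τ Φ) (adj : Ψ ⊣ Φ) :
    ∃ L : LeftLaxStr τ σ Ψ,
      (∀ (g : G) (d : D),
        (L.δ g).app d =
          Ψ.map ((τ.ρ g).map (adj.unit.app d)) ≫
            Ψ.map ((W.δ g).hom.app (Ψ.obj d)) ≫
            adj.counit.app ((σ.ρ g).obj (Ψ.obj d))) ∧
      ∀ g : G, IsIso (L.δ g) := by
  let δ' : ∀ g : G, τ.ρ g ⋙ Ψ ⟶ Ψ ⋙ σ.ρ g := fun g =>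
    (mateEquiv adj adj).symm (W.δ g).hom
  have hmate : ∀ g : G, mateEquiv adj adj (δ' g) = (W.δ g).hom := fun g =>
    Equiv.apply_symm_apply _ _
  have pent : ∀ (g h : G) (x : D),
      (δ' g).app ((τ.ρ h).obj x) ≫ (σ.ρ g).map ((δ' h).app x) ≫
          (σ.φ g h).hom.app (Ψ.obj x) =
        Ψ.map ((τ.φ g h).hom.app x) ≫ (δ' (g * h)).app x := by
    intro g h x
    have A : (TwoSquare.hComp (δ' h) (δ' g) : (τ.ρ h ⋙ τ.ρ g) ⋙ Ψ ⟶ Ψ ⋙ σ.ρ h ⋙ σ.ρ g) ≫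
          Functor.whiskerLeft Ψ (σ.φ g h).hom =
        Functor.whiskerRight (τ.φ g h).hom Ψ ≫ δ' (g * h) := by
      apply (mateEquiv adj adj).injective
      rw [mateEquiv_whiskerLeft_vert adj adj (TwoSquare.hComp (δ' h) (δ' g)), mateEquiv_whiskerRight_vert,
        mateEquiv_vcomp adj adj adj, hmate, hmate, hmate]
      ext y
      simp only [TwoSquare.vComp, NatTrans.comp_app, Functor.whiskerLeft_app,
        Functor.whiskerRight_app, Functor.comp_obj, Category.assoc,
        Functor.associator_hom_app, Functor.associator_inv_app, Category.id_comp]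
      exact (W.pentagon g h y).symm
    have := congr_arg (fun t => NatTrans.app t x) A
    simpa [TwoSquare.hComp] using this
  refine ⟨⟨δ', pent⟩, fun g d => ?_, fun g => ?_⟩
  · simp [δ', mateEquiv]
  · haveI := τ.isEquiv g
    haveI := σ.isEquiv g
    have it := iterated_mateEquiv_conjugateEquiv adj adj
      ((τ.ρ g).adjunction) ((σ.ρ g).adjunction) (δ' g)
    rw [hmate] at it
    haveI : IsIso (mateEquiv ((σ.ρ g).adjunction) ((τ.ρ g).adjunction)
        (W.δ g).hom) := by
      dsimp only [mateEquiv, Equiv.coe_fn_mk]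
      infer_instance
    haveI : IsIso (conjugateEquiv (adj.comp (σ.ρ g).adjunction)
        (((τ.ρ g).adjunction).comp adj) (δ' g)) := by
      rw [← it]; infer_instance
    exact conjugateEquiv_of_iso (adj.comp (σ.ρ g).adjunction) (((τ.ρ g).adjunction).comp adj) (δ' g)
end

section
/- Let G be a group acting on categories C and D, let (Φ, δ) : C → D be a weak G-functor, and let Ψ : D → C be a left adjoint of Φ, equipped with the weak G-structure δ'_g given by the mates of the δ_g along the adjunction. Then the unit ε : id_D → Φ ∘ Ψ and the counit η : Ψ ∘ Φ → id_C of the adjunction are G-natural transformations; hence Ψ and Φ are G-adjoint. -/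
open CategoryTheory

universe v₁ v₂ v₃ u₁ u₂ u₃

variable {G : Type*} [Group G]
variable {C : Type u₁} [Category.{v₁} C] {D : Type u₂} [Category.{v₂} D]
  {E : Type u₃} [Category.{v₃} E]

/-- If the left adjoint `Ψ` of a weak `G`-functor `Φ` is equipped with the weak
`G`-structure given by the mates `δ'_g` of the structure maps `δ_g`, then the unit
and the counit of the adjunction are `G`-natural; hence `Ψ` and `Φ` are `G`-adjoint. -/
theorem WeakStr.unit_counit_gNatural {σ : GrpAction G C} {τ : GrpAction G D}
    {Φ : C ⥤ D} {Ψ : D ⥤ C} (W : WeakStr σ τ Φ) (adj : Ψ ⊣ Φ)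
    (δ' : ∀ g : G, τ.ρ g ⋙ Ψ ⟶ Ψ ⋙ σ.ρ g)
    (hδ' : ∀ (g : G) (d : D),
      (δ' g).app d =
        Ψ.map ((τ.ρ g).map (adj.unit.app d)) ≫
          Ψ.map ((W.δ g).hom.app (Ψ.obj d)) ≫
          adj.counit.app ((σ.ρ g).obj (Ψ.obj d))) :
    (∀ (g : G) (d : D),
      (τ.ρ g).map (adj.unit.app d) ≫ (W.δ g).hom.app (Ψ.obj d) =
        adj.unit.app ((τ.ρ g).obj d) ≫ Φ.map ((δ' g).app d)) ∧
    (∀ (g : G) (x : C),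
      (δ' g).app (Φ.obj x) ≫ (σ.ρ g).map (adj.counit.app x) =
        Ψ.map ((W.δ g).hom.app x) ≫ adj.counit.app ((σ.ρ g).obj x)) := by
  constructor
  · intro g d
    rw [hδ', Φ.map_comp, Φ.map_comp]
    slice_rhs 1 2 => erw [adj.unit_naturality]
    slice_rhs 2 3 => rw [adj.unit_naturality]
    simp only [Functor.comp_obj]
    slice_rhs 3 4 => rw [adj.right_triangle_components]
    simp
  · intro g x
    rw [hδ']
    have h1 := (W.δ g).hom.naturality (adj.counit.app x)
    simp only [Functor.comp_map, Functor.comp_obj, Functor.id_obj] at h1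
    slice_lhs 3 4 => erw [← adj.counit_naturality]
    slice_lhs 2 3 => rw [← Ψ.map_comp, ← h1, Ψ.map_comp]
    slice_lhs 1 2 => rw [← Ψ.map_comp, ← (τ.ρ g).map_comp,
      adj.right_triangle_components]
    simp
end

section
/- Let G be a group acting on categories C and D and let (Φ, δ) : C → D be a weak G-functor. Then Φ is an equivalence of categories if and only if there exists a weak G-functor Ψ : D → C together with G-natural isomorphisms Ψ ∘ Φ ≅ id_C and Φ ∘ Ψ ≅ id_D. -/
open CategoryTheory

universe v₁ v₂ v₃ u₁ u₂ u₃

variable {G : Type*} [Group G]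
variable {C : Type u₁} [Category.{v₁} C] {D : Type u₂} [Category.{v₂} D]
  {E : Type u₃} [Category.{v₃} E]

namespace WeakGEquivAux

variable {σ : GrpAction G C} {τ : GrpAction G D} {Φ : C ⥤ D}

/-- `Φ.map` applied to `(σ.ρ g).map f`, expressed via the weak structure. -/
lemma Φ_map_ρ_map (W : WeakStr σ τ Φ) (g : G) {x y : C} (f : x ⟶ y) :
    Φ.map ((σ.ρ g).map f) =
      (W.δ g).inv.app x ≫ (τ.ρ g).map (Φ.map f) ≫ (W.δ g).hom.app y := by
  have := NatIso.naturality_1 (W.δ g) f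
  dsimp at this
  rw [this]

/-- Inverted pentagon identity. -/
lemma pentagon_inv (W : WeakStr σ τ Φ) (g h : G) (x : C) :
    Φ.map ((σ.φ g h).hom.app x) ≫ (W.δ (g * h)).inv.app x =
      (W.δ g).inv.app ((σ.ρ h).obj x) ≫ (τ.ρ g).map ((W.δ h).inv.app x) ≫
        (τ.φ g h).hom.app (Φ.obj x) := by
  rw [← cancel_epi ((W.δ g).hom.app ((σ.ρ h).obj x)),
    ← cancel_epi ((τ.ρ g).map ((W.δ h).hom.app x))]
  have p := W.pentagon g h x
  calc (τ.ρ g).map ((W.δ h).hom.app x) ≫ (W.δ g).hom.app ((σ.ρ h).obj x) ≫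
        Φ.map ((σ.φ g h).hom.app x) ≫ (W.δ (g * h)).inv.app x
      = ((τ.φ g h).hom.app (Φ.obj x) ≫ (W.δ (g * h)).hom.app x) ≫
          (W.δ (g * h)).inv.app x := by rw [p]; simp
    _ = (τ.φ g h).hom.app (Φ.obj x) := by simp
    _ = (τ.ρ g).map ((W.δ h).hom.app x) ≫ (W.δ g).hom.app ((σ.ρ h).obj x) ≫
        (W.δ g).inv.app ((σ.ρ h).obj x) ≫ (τ.ρ g).map ((W.δ h).inv.app x) ≫
        (τ.φ g h).hom.app (Φ.obj x) := by
          simp [← Functor.map_comp_assoc]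

variable (e : C ≌ D)

/-- The weak structure on the quasi-inverse. -/
noncomputable def δΨ (W : WeakStr σ τ e.functor) (g : G) :
    e.inverse ⋙ σ.ρ g ≅ τ.ρ g ⋙ e.inverse :=
  NatIso.ofComponents
    (fun d =>
      e.unitIso.app ((σ.ρ g).obj (e.inverse.obj d)) ≪≫
        e.inverse.mapIso
          ((W.δ g).symm.app (e.inverse.obj d) ≪≫
            (τ.ρ g).mapIso (e.counitIso.app d)))
    (fun {d d'} f => by
      dsimp
      have h0 := e.unit.naturality ((σ.ρ g).map (e.inverse.map f))
      dsimp at h0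
      rw [reassoc_of% h0]
      simp only [Category.assoc, ← Functor.map_comp]
      congr 1
      have h1 := (W.δ g).inv.naturality (e.inverse.map f)
      dsimp at h1
      rw [reassoc_of% h1]
      simp only [Category.assoc, ← Functor.map_comp]
      congr 2
      have h2 := e.counit.naturality f
      dsimp at h2
      rw [h2])

lemma Φ_map_δΨ (W : WeakStr σ τ e.functor) (g : G) (d : D) :
    e.functor.map ((δΨ e W g).hom.app d) =
      (W.δ g).inv.app (e.inverse.obj d) ≫
        (τ.ρ g).map (e.counit.app d) ≫
          e.counitInv.app ((τ.ρ g).obj d) := by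
  dsimp [δΨ]
  rw [Functor.map_comp, ← e.counitInv_app_functor]
  have h1 := e.counitInv.naturality
    ((W.δ g).inv.app (e.inverse.obj d) ≫ (τ.ρ g).map (e.counit.app d))
  dsimp at h1
  rw [← Category.assoc, ← h1]

lemma δΨ_pentagon (W : WeakStr σ τ e.functor) (g h : G) (d : D) :
    (σ.φ g h).hom.app (e.inverse.obj d) ≫ (δΨ e W (g * h)).hom.app d =
      (σ.ρ g).map ((δΨ e W h).hom.app d) ≫
        (δΨ e W g).hom.app ((τ.ρ h).obj d) ≫
          e.inverse.map ((τ.φ g h).hom.app d) := by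
  apply e.functor.map_injective
  simp only [Functor.map_comp]
  rw [Φ_map_ρ_map W g]
  simp only [Φ_map_δΨ]
  rw [e.fun_inv_map _ _ ((τ.φ g h).hom.app d)]
  rw [reassoc_of% (pentagon_inv W g h (e.inverse.obj d))]
  have hnat := (τ.φ g h).hom.naturality (e.counit.app d)
  dsimp at hnat
  rw [← reassoc_of% hnat]
  simp only [Functor.comp_obj, Functor.map_comp, Category.assoc]
  simp only [Iso.hom_inv_id_app_assoc, Iso.inv_hom_id_app_assoc]
  rw [cancel_epi ((W.δ g).inv.app ((σ.ρ h).obj (e.inverse.obj d))),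
    cancel_epi ((τ.ρ g).map ((W.δ h).inv.app (e.inverse.obj d))),
    cancel_epi ((τ.ρ g).map ((τ.ρ h).map (e.counit.app d)))]
  rw [← Functor.map_comp_assoc, Iso.inv_hom_id_app]
  simp

lemma cond1 (W : WeakStr σ τ e.functor) (g : G) (x : C) :
    (σ.ρ g).map (e.unitInv.app x) =
      (δΨ e W g).hom.app (e.functor.obj x) ≫
        e.inverse.map ((W.δ g).hom.app x) ≫ e.unitInv.app ((σ.ρ g).obj x) := by
  rw [← cancel_mono (e.unit.app ((σ.ρ g).obj x))]
  simp only [Category.assoc, Iso.inv_hom_id_app, Category.comp_id]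
  dsimp [δΨ]
  rw [e.counit_app_functor]
  simp only [Category.comp_id, Category.assoc, ← Functor.map_comp]
  have hρ := Φ_map_ρ_map W g (e.unitInv.app x)
  dsimp at hρ
  rw [← hρ]
  have h0 := e.unit.naturality ((σ.ρ g).map (e.unitInv.app x))
  dsimp at h0
  exact h0

lemma cond2 (W : WeakStr σ τ e.functor) (g : G) (d : D) :
    (τ.ρ g).map (e.counit.app d) =
      (W.δ g).hom.app (e.inverse.obj d) ≫
        e.functor.map ((δΨ e W g).hom.app d) ≫ e.counit.app ((τ.ρ g).obj d) := by
  rw [Φ_map_δΨ]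
  simp

end WeakGEquivAux

/-- A weak `G`-functor is an equivalence of categories if and only if it admits a
weakly `G`-functorial quasi-inverse with `G`-natural unit and counit isomorphisms;
such a functor is called a weak `G`-equivalence. -/
theorem WeakStr.isEquivalence_iff {σ : GrpAction G C} {τ : GrpAction G D}
    {Φ : C ⥤ D} (W : WeakStr σ τ Φ) :
    Φ.IsEquivalence ↔
      ∃ (Ψ : D ⥤ C) (WΨ : WeakStr τ σ Ψ) (α : Φ ⋙ Ψ ≅ 𝟭 C) (β : Ψ ⋙ Φ ≅ 𝟭 D),
        (∀ (g : G) (x : C),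
          (σ.ρ g).map (α.hom.app x) =
            (WΨ.δ g).hom.app (Φ.obj x) ≫ Ψ.map ((W.δ g).hom.app x) ≫
              α.hom.app ((σ.ρ g).obj x)) ∧
        (∀ (g : G) (d : D),
          (τ.ρ g).map (β.hom.app d) =
            (W.δ g).hom.app (Ψ.obj d) ≫ Φ.map ((WΨ.δ g).hom.app d) ≫
              β.hom.app ((τ.ρ g).obj d)) := by
  constructor
  · intro hΦ
    exact ⟨Φ.asEquivalence.inverse,
      ⟨WeakGEquivAux.δΨ Φ.asEquivalence W, WeakGEquivAux.δΨ_pentagon Φ.asEquivalence W⟩,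
      Φ.asEquivalence.unitIso.symm, Φ.asEquivalence.counitIso,
      fun g x => WeakGEquivAux.cond1 Φ.asEquivalence W g x,
      fun g d => WeakGEquivAux.cond2 Φ.asEquivalence W g d⟩
  · rintro ⟨Ψ, WΨ, α, β, h₁, h₂⟩
    exact (CategoryTheory.Equivalence.mk Φ Ψ α.symm β).isEquivalence_functor
end

section
/- Let G be a group acting on categories A and C, and let i : A → C be a weak G-functor which is fully faithful and admits a left adjoint p : C → A. Then the induced functor i^G : A^G → C^G on categories of equivariant objects is fully faithful and admits a left adjoint, namely p^G where p is given the weak G-structure obtained from that of i by taking mates along the adjunction p ⊣ i. -/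
open CategoryTheory

universe v₁ v₂ v₃ u₁ u₂ u₃

variable {G : Type*} [Group G]
variable {C : Type u₁} [Category.{v₁} C] {D : Type u₂} [Category.{v₂} D]
  {E : Type u₃} [Category.{v₃} E]

namespace WeakStr

variable {σ : GrpAction G C} {τ : GrpAction G D} {Φ : C ⥤ D}

/-! ### Auxiliary development: mates along an adjunction -/

section MateAux

variable {A : Type u₃} [Category.{v₃} A]
variable {i : A ⥤ C} {p : C ⥤ A} (adj : p ⊣ i)
variable {F : C ⥤ C} {F' : A ⥤ A} (β : i ⋙ F ⟶ F' ⋙ i)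

/-- The mate `F ⋙ p ⟶ p ⋙ F'` of `β : i ⋙ F ⟶ F' ⋙ i` along `p ⊣ i`. -/
noncomputable def myMate : F ⋙ p ⟶ p ⋙ F' :=
  (mateEquiv adj adj).symm β

lemma myMate_app (x : C) :
    (myMate adj β).app x =
      p.map (F.map (adj.unit.app x)) ≫ p.map (β.app (p.obj x)) ≫
        adj.counit.app (F'.obj (p.obj x)) := by
  simp [myMate, mateEquiv]

lemma unit_myMate (c : C) :
    adj.unit.app (F.obj c) ≫ i.map ((myMate adj β).app c) =
      F.map (adj.unit.app c) ≫ β.app (p.obj c) := by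
  have := unit_mateEquiv_symm adj adj β c
  simp only [myMate]
  exact this.symm

lemma myMate_counit (a : A) :
    (myMate adj β).app (i.obj a) ≫ F'.map (adj.counit.app a) =
      p.map (β.app a) ≫ adj.counit.app (F'.obj a) := by
  have := mateEquiv_counit_symm adj adj β a
  simp only [myMate]
  exact this.symm

lemma isIso_myMate [IsIso β] (hF : F.IsEquivalence) (hF' : F'.IsEquivalence) :
    IsIso (myMate adj β) := by
  haveI := hF; haveI := hF'
  let adjσ : F ⊣ F.asEquivalence.inverse := F.asEquivalence.toAdjunction
  let adjα : F' ⊣ F'.asEquivalence.inverse := F'.asEquivalence.toAdjunction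
  haveI : IsIso adjσ.unit := by
    show IsIso F.asEquivalence.unitIso.hom; infer_instance
  haveI : IsIso adjα.counit := by
    show IsIso F'.asEquivalence.counitIso.hom; infer_instance
  have key : mateEquiv adj adj (myMate adj β) = β := by
    unfold myMate; exact (mateEquiv adj adj).apply_symm_apply β
  have iter := iterated_mateEquiv_conjugateEquiv adj adj adjσ adjα (myMate adj β)
  rw [key] at iter
  haveI h1 : IsIso (mateEquiv adjα adjσ β) := by
    dsimp [mateEquiv]
    infer_instance
  haveI : IsIso (conjugateEquiv (adj.comp adjα) (adjσ.comp adj) (myMate adj β)) :=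
    iter ▸ h1
  exact conjugateEquiv_of_iso (adj.comp adjα) (adjσ.comp adj) (myMate adj β)

end MateAux

section Descend

variable {A : Type u₃} [Category.{v₃} A]
variable {α : GrpAction G A} {σ : GrpAction G C} {i : A ⥤ C} (Wi : WeakStr α σ i)
variable {p : C ⥤ A} (adj : p ⊣ i)

/-- The mate of the weak `G`-structure on `i`. -/
noncomputable def mpg (g : G) : σ.ρ g ⋙ p ⟶ p ⋙ α.ρ g := myMate adj (Wi.δ g).hom

lemma isIso_mpg (g : G) : IsIso (mpg Wi adj g) :=
  isIso_myMate adj (Wi.δ g).hom (σ.isEquiv g) (α.isEquiv g)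

lemma mate_pent (g h : G) (x : C) :
    (mpg Wi adj g).app ((σ.ρ h).obj x) ≫ (α.ρ g).map ((mpg Wi adj h).app x) ≫
        (α.φ g h).hom.app (p.obj x) =
      p.map ((σ.φ g h).hom.app x) ≫ (mpg Wi adj (g * h)).app x := by
  apply (adj.homEquiv _ _).injective
  simp only [Adjunction.homEquiv_unit, Functor.comp_obj, Functor.map_comp]
  have u1 := unit_myMate adj (Wi.δ g).hom ((σ.ρ h).obj x)
  have u2 := unit_myMate adj (Wi.δ h).hom x
  have u3 := unit_myMate adj (Wi.δ (g * h)).hom x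
  have nat1 : (Wi.δ g).hom.app (p.obj ((σ.ρ h).obj x)) ≫
        i.map ((α.ρ g).map ((mpg Wi adj h).app x)) =
      (σ.ρ g).map (i.map ((mpg Wi adj h).app x)) ≫
        (Wi.δ g).hom.app ((α.ρ h).obj (p.obj x)) :=
    ((Wi.δ g).hom.naturality ((mpg Wi adj h).app x)).symm
  have pent := Wi.pentagon g h (p.obj x)
  have natφ := (σ.φ g h).hom.naturality (adj.unit.app x)
  have natη := adj.unit.naturality ((σ.φ g h).hom.app x)
  simp only [Functor.comp_map, Functor.comp_obj, Functor.id_obj, Functor.id_map] at natφ natη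
  calc adj.unit.app _ ≫ i.map ((mpg Wi adj g).app ((σ.ρ h).obj x)) ≫
        i.map ((α.ρ g).map ((mpg Wi adj h).app x)) ≫ i.map ((α.φ g h).hom.app (p.obj x))
      = ((σ.ρ g).map (adj.unit.app ((σ.ρ h).obj x)) ≫
          (Wi.δ g).hom.app (p.obj ((σ.ρ h).obj x))) ≫
          i.map ((α.ρ g).map ((mpg Wi adj h).app x)) ≫
          i.map ((α.φ g h).hom.app (p.obj x)) := by
        rw [← Category.assoc, ← Category.assoc, ← u1]
        simp [mpg]
    _ = (σ.ρ g).map (adj.unit.app ((σ.ρ h).obj x) ≫ i.map ((mpg Wi adj h).app x)) ≫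
          (Wi.δ g).hom.app ((α.ρ h).obj (p.obj x)) ≫
          i.map ((α.φ g h).hom.app (p.obj x)) := by
        rw [Functor.map_comp]
        simp only [Category.assoc]
        rw [reassoc_of% nat1]
    _ = (σ.ρ g).map ((σ.ρ h).map (adj.unit.app x)) ≫
          ((σ.ρ g).map ((Wi.δ h).hom.app (p.obj x)) ≫
          (Wi.δ g).hom.app ((α.ρ h).obj (p.obj x)) ≫
          i.map ((α.φ g h).hom.app (p.obj x))) := by
        rw [show adj.unit.app ((σ.ρ h).obj x) ≫ i.map ((mpg Wi adj h).app x) =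
            (σ.ρ h).map (adj.unit.app x) ≫ (Wi.δ h).hom.app (p.obj x) from u2]
        simp
    _ = (σ.ρ g).map ((σ.ρ h).map (adj.unit.app x)) ≫
          (σ.φ g h).hom.app (i.obj (p.obj x)) ≫ (Wi.δ (g * h)).hom.app (p.obj x) := by
        rw [← pent]
    _ = (σ.φ g h).hom.app x ≫ (σ.ρ (g * h)).map (adj.unit.app x) ≫
          (Wi.δ (g * h)).hom.app (p.obj x) := by
        rw [← Category.assoc, natφ]
        simp
    _ = adj.unit.app _ ≫ i.map (p.map ((σ.φ g h).hom.app x)) ≫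
          i.map ((mpg Wi adj (g * h)).app x) := by
        rw [← u3, ← Category.assoc, natη]
        simp [mpg]

/-- The weak `G`-structure on `p` obtained by taking mates. -/
noncomputable def Wp : WeakStr σ α p where
  δ g := (@asIso _ _ _ _ (mpg Wi adj g) (isIso_mpg Wi adj g)).symm
  pentagon g h x := by
    haveI := isIso_mpg Wi adj g
    haveI := isIso_mpg Wi adj h
    haveI := isIso_mpg Wi adj (g * h)
    simp only [Iso.symm_hom, asIso_inv, NatIso.isIso_inv_app, Functor.comp_obj]
    rw [IsIso.comp_inv_eq, Category.assoc, Category.assoc, ← mate_pent Wi adj g h x, IsIso.inv_hom_id_assoc,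
      ← Functor.map_comp_assoc, IsIso.inv_hom_id]
    simp

lemma Wp_inv_app (g : G) (x : C) :
    ((Wp Wi adj).δ g).inv.app x = (mpg Wi adj g).app x := by
  simp [Wp]

lemma Wp_hom_inv (g : G) (x : C) :
    ((Wp Wi adj).δ g).hom.app x ≫ (mpg Wi adj g).app x = 𝟙 _ := by
  rw [← Wp_inv_app]
  simp [← NatTrans.comp_app]

lemma Wp_inv_hom (g : G) (x : C) :
    (mpg Wi adj g).app x ≫ ((Wp Wi adj).δ g).hom.app x = 𝟙 _ := by
  rw [← Wp_inv_app]
  simp [← NatTrans.comp_app]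

lemma igG_faithful [i.Faithful] : Wi.equivFunctor.Faithful :=
  ⟨fun {a b} {u v} h => by
    apply EquivObj.hom_ext
    apply i.map_injective
    have := congrArg EquivHom.f h
    exact this⟩

lemma igG_full [i.Full] [i.Faithful] : Wi.equivFunctor.Full := by
  constructor
  intro a b w
  refine ⟨⟨i.preimage w.f, fun g => ?_⟩, ?_⟩
  · apply i.map_injective
    have hw := w.comm g
    simp only [WeakStr.equivFunctor, WeakStr.liftObj, Iso.trans_hom, Functor.mapIso_hom,
      Iso.symm_hom, Iso.app_inv, Category.assoc] at hw
    have nat : i.map ((α.ρ g).map (i.preimage w.f)) ≫ (Wi.δ g).inv.app b.c =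
        (Wi.δ g).inv.app a.c ≫ (σ.ρ g).map (i.map (i.preimage w.f)) :=
      (Wi.δ g).inv.naturality (i.preimage w.f)
    rw [Functor.map_comp, Functor.map_comp]
    rw [← cancel_mono ((Wi.δ g).inv.app b.c)]
    simp only [Category.assoc]
    have e : i.map (i.preimage w.f) = w.f := i.map_preimage w.f
    rw [nat]
    exact (congrArg (fun t => i.map (a.θ g).hom ≫ (Wi.δ g).inv.app a.c ≫ (σ.ρ g).map t) e).trans
      (hw.trans (congrArg (fun t => t ≫ i.map (b.θ g).hom ≫ (Wi.δ g).inv.app b.c) e.symm))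
  · apply EquivObj.hom_ext
    simp [WeakStr.equivFunctor]
    exact i.map_preimage w.f

/-- The induced adjunction between categories of equivariant objects. -/
noncomputable def equivAdj : (Wp Wi adj).equivFunctor ⊣ Wi.equivFunctor where
  unit :=
    { app := fun x =>
        ⟨adj.unit.app x.c, by
          intro g
          have n := adj.unit.naturality (x.θ g).hom
          simp only [Functor.id_obj, Functor.id_map, Functor.comp_obj, Functor.comp_map] at n
          have u := unit_myMate adj (Wi.δ g).hom x.c
          simp only [WeakStr.equivFunctor, WeakStr.liftObj, Iso.trans_hom, Functor.mapIso_hom,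
            Iso.symm_hom, Iso.app_inv, Functor.map_comp, Category.assoc, Wp_inv_app,
            Functor.comp_obj, Functor.id_obj]
          rw [reassoc_of% n.symm]
          simp only [mpg]
          rw [reassoc_of% u]
          simp⟩
      naturality := fun x y u => by
        apply EquivObj.hom_ext
        have := adj.unit.naturality u.f
        simp only [Functor.id_obj, Functor.id_map, Functor.comp_obj, Functor.comp_map] at this
        exact this }
  counit :=
    { app := fun a =>
        ⟨adj.counit.app a.c, by
          intro g
          have n := adj.counit.naturality (a.θ g).hom
          simp only [Functor.id_obj, Functor.id_map, Functor.comp_obj, Functor.comp_map] at n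
          have u := myMate_counit adj (Wi.δ g).hom a.c
          simp only [WeakStr.equivFunctor, WeakStr.liftObj, Iso.trans_hom, Functor.mapIso_hom,
            Iso.symm_hom, Iso.app_inv, Functor.map_comp, Category.assoc, Wp_inv_app,
            Functor.comp_obj, Functor.id_obj]
          simp only [mpg]
          rw [u]
          slice_lhs 2 3 => rw [← Functor.map_comp, Iso.inv_hom_id_app]
          simpa using n⟩
      naturality := fun a b u => by
        apply EquivObj.hom_ext
        have := adj.counit.naturality u.f
        simp only [Functor.id_obj, Functor.id_map, Functor.comp_obj, Functor.comp_map] at this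
        exact this }
  left_triangle_components x := by
    apply EquivObj.hom_ext
    simpa [WeakStr.equivFunctor, WeakStr.liftObj] using adj.left_triangle_components x.c
  right_triangle_components a := by
    apply EquivObj.hom_ext
    simpa [WeakStr.equivFunctor, WeakStr.liftObj] using adj.right_triangle_components a.c

end Descend

end WeakStr

/-- If `i : A ⥤ C` is a fully faithful weak `G`-functor admitting a left adjoint
`p`, then `i^G : A^G ⥤ C^G` is fully faithful and admits a left adjoint, namely
`p^G`, where `p` carries the weak `G`-structure obtained from that of `i` by taking
mates along the adjunction `p ⊣ i`. -/
theorem WeakStr.fullyFaithful_leftAdjoint_descends {A : Type u₃} [Category.{v₃} A]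
    {α : GrpAction G A} {σ : GrpAction G C} {i : A ⥤ C} (Wi : WeakStr α σ i)
    [i.Full] [i.Faithful] {p : C ⥤ A} (adj : p ⊣ i) :
    ∃ Wp : WeakStr σ α p,
      (∀ (g : G) (x : C),
        (Wp.δ g).inv.app x =
          p.map ((σ.ρ g).map (adj.unit.app x)) ≫
            p.map ((Wi.δ g).hom.app (p.obj x)) ≫
            adj.counit.app ((α.ρ g).obj (p.obj x))) ∧
      Wi.equivFunctor.Full ∧ Wi.equivFunctor.Faithful ∧
      Nonempty (Wp.equivFunctor ⊣ Wi.equivFunctor) := by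
  refine ⟨WeakStr.Wp Wi adj, fun g x => ?_, WeakStr.igG_full Wi,
    WeakStr.igG_faithful Wi, ⟨WeakStr.equivAdj Wi adj⟩⟩
  rw [WeakStr.Wp_inv_app]
  simp only [WeakStr.mpg]
  rw [WeakStr.myMate_app]
end

section
/- Let C be a pretriangulated category and let G be a group acting on C such that each ρ_g is a triangulated autoequivalence (additive, commuting with the shift, sending distinguished triangles to distinguished triangles) and each φ_{g,h} is compatible with the shift. Let A and B be full subcategories of C closed under isomorphism and shifts such that: Hom_C(b, a) = 0 for all a ∈ A, b ∈ B; every object c of C fits into a distinguished triangle b → c → a → b[1] with a ∈ A, b ∈ B; and ρ_g(A) ⊆ A, ρ_g(B) ⊆ B for all g. Suppose the category C^G of equivariant objects carries a pretriangulated structure whose shift is induced from C and whose distinguished triangles are exactly those whose image under the forgetful functor C^G → C is distinguished. Let A^G and B^G be the full subcategories of C^G of equivariant objects whose underlying object lies in A, respectively B. Then C^G = ⟨A^G, B^G⟩ is a semiorthogonal decomposition: Hom_{C^G}(y, x) = 0 for all x ∈ A^G, y ∈ B^G, and every object of C^G fits into a distinguished triangle y → z → x → y[1] in C^G with x ∈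 A^G and y ∈ B^G. -/
open CategoryTheory CategoryTheory.Limits CategoryTheory.Pretriangulated

universe v₁ u₁

variable {G : Type*} [Group G] {C : Type u₁} [Category.{v₁} C]

section Aux

variable [HasZeroObject C] [Preadditive C] [HasShift C ℤ]
  [∀ n : ℤ, (shiftFunctor C n).Additive] [Pretriangulated C]

lemma sod_existsUnique (A B : Set C)
    (hA_shift : ∀ (n : ℤ) (x : C), x ∈ A → x⟦n⟧ ∈ A)
    (hsemi : ∀ a ∈ A, ∀ b ∈ B, ∀ f : b ⟶ a, f = 0)
    (T₁ T₂ : Triangle C) (h₁ : T₁ ∈ distTriang C) (h₂ : T₂ ∈ distTriang C)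
    (hb : T₁.obj₁ ∈ B) (ha : T₂.obj₃ ∈ A) (u : T₁.obj₂ ⟶ T₂.obj₂) :
    ∃! β : T₁.obj₁ ⟶ T₂.obj₁, T₁.mor₁ ≫ u = β ≫ T₂.mor₁ := by
  have hzero : (T₁.mor₁ ≫ u) ≫ T₂.mor₂ = 0 := by
    rw [Category.assoc]
    exact hsemi _ ha _ hb (T₁.mor₁ ≫ u ≫ T₂.mor₂)
  obtain ⟨β, hβ⟩ := Triangle.coyoneda_exact₂ T₂ h₂ (T₁.mor₁ ≫ u) hzero
  refine ⟨β, hβ, ?_⟩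
  intro β' hβ'
  have hδ : (β' - β) ≫ (T₂.invRotate).mor₂ = 0 := by
    change (β' - β) ≫ T₂.mor₁ = 0
    rw [Preadditive.sub_comp, ← hβ', ← hβ, sub_self]
  obtain ⟨w, hw⟩ := Triangle.coyoneda_exact₂ _ (inv_rot_of_distTriang _ h₂) (β' - β) hδ
  have hw0 : w = 0 := hsemi _ (hA_shift (-1) _ ha) _ hb w
  rw [hw0, zero_comp] at hw
  exact sub_eq_zero.mp hw

end Aux

instance (σ : GrpAction G C) : (equivForget σ).Faithful where
  map_injective h := EquivHom.ext h

theorem elagin_semiorthogonal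
    [HasZeroObject C] [Preadditive C] [HasShift C ℤ]
    [∀ n : ℤ, (shiftFunctor C n).Additive] [Pretriangulated C]
    (σ : GrpAction G C)
    [∀ g : G, (σ.ρ g).CommShift ℤ] [∀ g : G, (σ.ρ g).Additive]
    [∀ g : G, (σ.ρ g).IsTriangulated]
    [∀ g h : G, NatTrans.CommShift (σ.φ g h).hom ℤ]
    [Preadditive (EquivObj σ)] [HasShift (EquivObj σ) ℤ] [HasZeroObject (EquivObj σ)]
    [∀ n : ℤ, (shiftFunctor (EquivObj σ) n).Additive] [Pretriangulated (EquivObj σ)]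
    [(equivForget σ).CommShift ℤ] [(equivForget σ).Additive]
    (hdist : ∀ T : Triangle (EquivObj σ),
      (T ∈ distTriang (EquivObj σ)) ↔ ((equivForget σ).mapTriangle.obj T ∈ distTriang C))
    (A B : Set C)
    (hA_iso : ∀ {x y : C}, (x ≅ y) → x ∈ A → y ∈ A)
    (hB_iso : ∀ {x y : C}, (x ≅ y) → x ∈ B → y ∈ B)
    (hA_shift : ∀ (n : ℤ) (x : C), x ∈ A → x⟦n⟧ ∈ A)
    (hB_shift : ∀ (n : ℤ) (x : C), x ∈ B → x⟦n⟧ ∈ B)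
    (hsemi : ∀ a ∈ A, ∀ b ∈ B, ∀ f : b ⟶ a, f = 0)
    (hdec : ∀ c : C, ∃ (a b : C) (_ : a ∈ A) (_ : b ∈ B) (f : b ⟶ c) (g : c ⟶ a)
      (h : a ⟶ b⟦(1 : ℤ)⟧), Triangle.mk f g h ∈ distTriang C)
    (hGA : ∀ (g : G) (x : C), x ∈ A → (σ.ρ g).obj x ∈ A)
    (hGB : ∀ (g : G) (x : C), x ∈ B → (σ.ρ g).obj x ∈ B) :
    (∀ (x y : EquivObj σ), x.c ∈ A → y.c ∈ B → ∀ u : y ⟶ x, u = 0) ∧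
    (∀ z : EquivObj σ, ∃ (x y : EquivObj σ) (_ : x.c ∈ A) (_ : y.c ∈ B)
      (f : y ⟶ z) (g : z ⟶ x) (h : x ⟶ y⟦(1 : ℤ)⟧),
        Triangle.mk f g h ∈ distTriang (EquivObj σ)) := by

  constructor
  · intro x y hx hy u
    apply (equivForget σ).map_injective
    rw [Functor.map_zero]
    exact hsemi _ hx _ hy u.f
  · intro z
    obtain ⟨a, b, ha, hb, f, gq, hq, hT⟩ := hdec z.c
    set T : Triangle C := Triangle.mk f gq hq with hTdef
    have hρT : ∀ g : G, (σ.ρ g).mapTriangle.obj T ∈ distTriang C :=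
      fun g => (σ.ρ g).map_distinguished T hT
    have hβ : ∀ g : G, ∃! βg : b ⟶ (σ.ρ g).obj b,
        f ≫ (z.θ g).hom = βg ≫ (σ.ρ g).map f :=
      fun g => sod_existsUnique A B hA_shift hsemi T ((σ.ρ g).mapTriangle.obj T)
        hT (hρT g) hb (hGA g a ha) (z.θ g).hom
    choose β hβ₁ hβ₂ using hβ
    have hγ : ∀ g : G, ∃! γg : (σ.ρ g).obj b ⟶ b,
        (σ.ρ g).map f ≫ (z.θ g).inv = γg ≫ f :=
      fun g => sod_existsUnique A B hA_shift hsemi ((σ.ρ g).mapTriangle.obj T) T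
        (hρT g) hT (hGB g b hb) ha (z.θ g).inv
    choose γ hγ₁ _ using hγ
    have hβγ : ∀ g : G, β g ≫ γ g = 𝟙 b := by
      intro g
      have p1 : f ≫ 𝟙 z.c = (β g ≫ γ g) ≫ f := by
        rw [Category.assoc, ← hγ₁ g, ← Category.assoc, ← hβ₁ g]
        simp
      have p2 : f ≫ 𝟙 z.c = 𝟙 b ≫ f := by simp
      exact (sod_existsUnique A B hA_shift hsemi T T hT hT hb ha (𝟙 z.c)).unique p1 p2
    have hγβ : ∀ g : G, γ g ≫ β g = 𝟙 ((σ.ρ g).obj b) := by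
      intro g
      have p1 : (σ.ρ g).map f ≫ 𝟙 ((σ.ρ g).obj z.c) = (γ g ≫ β g) ≫ (σ.ρ g).map f := by
        rw [Category.assoc, ← hβ₁ g, ← Category.assoc, ← hγ₁ g]
        simp
      have p2 : (σ.ρ g).map f ≫ 𝟙 ((σ.ρ g).obj z.c) = 𝟙 ((σ.ρ g).obj b) ≫ (σ.ρ g).map f := by simp
      exact (sod_existsUnique A B hA_shift hsemi ((σ.ρ g).mapTriangle.obj T)
        ((σ.ρ g).mapTriangle.obj T) (hρT g) (hρT g) (hGB g b hb) (hGA g a ha)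
        (𝟙 ((σ.ρ g).obj z.c))).unique p1 p2
    have hcompat : ∀ g h : G,
        β (g * h) = β g ≫ (σ.ρ g).map (β h) ≫ (σ.φ g h).hom.app b := by
      intro g h
      refine (hβ₂ (g * h) _ ?_).symm
      have hnat := (σ.φ g h).hom.naturality f
      calc f ≫ (z.θ (g * h)).hom
          = f ≫ (z.θ g).hom ≫ (σ.ρ g).map ((z.θ h).hom) ≫ (σ.φ g h).hom.app z.c := by
            rw [z.compat g h]
        _ = (f ≫ (z.θ g).hom) ≫ (σ.ρ g).map ((z.θ h).hom) ≫ (σ.φ g h).hom.app z.c := by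
            rw [Category.assoc]
        _ = (β g ≫ (σ.ρ g).map f) ≫ (σ.ρ g).map ((z.θ h).hom) ≫ (σ.φ g h).hom.app z.c := by
            rw [hβ₁ g]
        _ = β g ≫ (σ.ρ g).map (f ≫ (z.θ h).hom) ≫ (σ.φ g h).hom.app z.c := by
            rw [Functor.map_comp]; simp only [Category.assoc]
        _ = β g ≫ (σ.ρ g).map (β h ≫ (σ.ρ h).map f) ≫ (σ.φ g h).hom.app z.c := by
            rw [hβ₁ h]
        _ = β g ≫ (σ.ρ g).map (β h) ≫ (σ.ρ g).map ((σ.ρ h).map f) ≫ (σ.φ g h).hom.app z.c := by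
            rw [Functor.map_comp]; simp only [Category.assoc]
        _ = β g ≫ (σ.ρ g).map (β h) ≫ (σ.φ g h).hom.app b ≫ (σ.ρ (g * h)).map f := by
            rw [← hnat]; rfl
        _ = (β g ≫ (σ.ρ g).map (β h) ≫ (σ.φ g h).hom.app b) ≫ (σ.ρ (g * h)).map f := by
            simp only [Category.assoc]
    let y : EquivObj σ := ⟨b, fun g => ⟨β g, γ g, hβγ g, hγβ g⟩, hcompat⟩
    let f_eq : y ⟶ z := ⟨f, fun g => (hβ₁ g).symm⟩
    obtain ⟨x, g', h', hTric⟩ := Pretriangulated.distinguished_cocone_triangle f_eq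
    refine ⟨x, y, ?_, hb, f_eq, g', h', hTric⟩
    have himg := (hdist _).mp hTric
    obtain ⟨e, -, -⟩ := exists_iso_of_arrow_iso T _ hT himg
      (Arrow.isoMk (Iso.refl _) (Iso.refl _) (by simp [equivForget, f_eq]; exact (Category.id_comp _).trans (Category.comp_id _).symm))
    exact hA_iso (Triangle.π₃.mapIso e) ha
end
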